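/- For every ℓ > 0 and α ∈ (0, π/2), the set {θ ∈ (arctan(2ℓ + tan α), π/2) : ρ(F_{ℓ,α,θ}) ∉ ℚ} has empty interior; that is, every nonempty open subinterval of (arctan(2ℓ + tan α), π/2) contains a parameter θ with ρ(F_{ℓ,α,θ}) ∈ ℚ. -/

import Mathlib

open Real Filter Set

/-- Rotation number of a lift `T` of a circle homeomorphism,
defined as the limit of `T^[n] 0 / n` (which exists and is independent
of the base point for lifts of orientation-preserving circle homeos). -/
noncomputable def rotationNumber (T : ℝ → ℝ) : ℝ :=
  limUnder atTop (fun n : ℕ => T^[n] 0 / (n : ℝ))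

/-- The expansion factor `Λ = sin(θ+α)/sin(θ−α)`. -/
noncomputable def Lam (α θ : ℝ) : ℝ := Real.sin (θ + α) / Real.sin (θ - α)

/-- The break point of increase `a₀ = (tan θ − 2ℓ)/(2 tan θ)`. -/
noncomputable def brk0 (ℓ θ : ℝ) : ℝ := (Real.tan θ - 2 * ℓ) / (2 * Real.tan θ)

/-- The break point of decrease `a₁ = −(2ℓ + tan α)/(2 tan θ)`. -/
noncomputable def brk1 (ℓ α θ : ℝ) : ℝ := -(2 * ℓ + Real.tan α) / (2 * Real.tan θ)

/-- The two-piece definition of the lift on the fundamental interval `[a₁, a₁+1)`. -/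
noncomputable def Ftrap0 (ℓ α θ x : ℝ) : ℝ :=
  if x ≤ brk0 ℓ θ then -brk1 ℓ α θ + (Lam α θ)⁻¹ * (x - brk1 ℓ α θ)
  else 1 - brk0 ℓ θ + Lam α θ * (x - brk0 ℓ θ)

/-- The lift `F_{ℓ,α,θ} : ℝ → ℝ` of the Poincaré map of the internal-wave
billiard in a rectangular trapezoid: it is given by the two-piece formula on
`[a₁, a₁+1)` and extended by `F(x+k) = F(x)+k` for `k ∈ ℤ`. -/
noncomputable def Ftrap (ℓ α θ x : ℝ) : ℝ :=
  Ftrap0 ℓ α θ (x - ⌊x - brk1 ℓ α θ⌋) + ⌊x - brk1 ℓ α θ⌋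



noncomputable def FLa (ℓ m t x : ℝ) : ℝ := (2*ℓ + m + (t - m)*x)/(t + m)
noncomputable def FRa (ℓ m t x : ℝ) : ℝ := (2*ℓ - m + (t + m)*x)/(t - m)
noncomputable def A0a (ℓ t : ℝ) : ℝ := (t - 2*ℓ)/(2*t)
noncomputable def A1a (ℓ m t : ℝ) : ℝ := -(2*ℓ + m)/(2*t)
noncomputable def Ga0 (ℓ m t x : ℝ) : ℝ :=
  if x ≤ A0a ℓ t then FLa ℓ m t x else FRa ℓ m t x
noncomputable def Ga (ℓ m t x : ℝ) : ℝ :=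
  Ga0 ℓ m t (x - ⌊x - A1a ℓ m t⌋) + ⌊x - A1a ℓ m t⌋

section algebra

variable {ℓ m t : ℝ} (hℓ : 0 < ℓ) (hm : 0 < m) (ht : 2*ℓ + m < t)

include hℓ hm ht

lemma A1a_neg : A1a ℓ m t < 0 := by
  have h0 : 0 < t := by linarith
  have : 0 < (2*ℓ + m)/(2*t) := by positivity
  unfold A1a; rw [neg_div]; linarith

lemma A1a_gt : -(1/2 : ℝ) < A1a ℓ m t := by
  have h0 : 0 < t := by linarith
  unfold A1a
  rw [neg_div, neg_lt_neg_iff, div_lt_iff₀ (by linarith : (0:ℝ) < 2*t)]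
  linarith

lemma A0a_pos : 0 < A0a ℓ t := by
  have h0 : 0 < t := by linarith
  exact div_pos (by linarith) (by linarith)

lemma A0a_lt_half : A0a ℓ t < 1/2 := by
  have h0 : 0 < t := by linarith
  unfold A0a
  rw [div_lt_div_iff₀ (by linarith) (by norm_num : (0:ℝ) < 2)]
  linarith

lemma A1a_lt_A0a : A1a ℓ m t < A0a ℓ t :=
  lt_trans (A1a_neg hℓ hm ht) (A0a_pos hℓ hm ht)

lemma A0a_lt_A1a_add_one : A0a ℓ t < A1a ℓ m t + 1 := by
  have h1 := A0a_lt_half hℓ hm ht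
  have h2 := A1a_gt hℓ hm ht
  linarith

/-- comparison of the two branches -/
lemma FLa_sub_FRa : FLa ℓ m t x - FRa ℓ m t x = 4*m*t*(A0a ℓ t - x)/((t+m)*(t-m)) := by
  have h0 : (0:ℝ) < t := by linarith
  have h1 : t + m ≠ 0 := by positivity
  have h2 : t - m ≠ 0 := by nlinarith
  unfold FLa FRa A0a
  field_simp
  ring

lemma FRa_le_FLa (hx : x ≤ A0a ℓ t) : FRa ℓ m t x ≤ FLa ℓ m t x := by
  have h0 : (0:ℝ) < t := by linarith
  have h1 : (0:ℝ) < t + m := by linarith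
  have h2 : (0:ℝ) < t - m := by linarith
  have := FLa_sub_FRa (x := x) hℓ hm ht
  nlinarith [mul_nonneg (mul_nonneg (by positivity : (0:ℝ) ≤ 4*m*t) (by linarith : (0:ℝ) ≤ A0a ℓ t - x)) (le_of_lt (by positivity : (0:ℝ) < ((t+m)*(t-m))⁻¹)), div_nonneg (mul_nonneg (by positivity : (0:ℝ) ≤ 4*m*t) (by linarith : (0:ℝ) ≤ A0a ℓ t - x)) (by positivity : (0:ℝ) ≤ (t+m)*(t-m))]

lemma FLa_le_FRa (hx : A0a ℓ t ≤ x) : FLa ℓ m t x ≤ FRa ℓ m t x := by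
  have h0 : (0:ℝ) < t := by linarith
  have h2 : (0:ℝ) < t - m := by linarith
  have := FLa_sub_FRa (x := x) hℓ hm ht
  nlinarith [div_nonpos_of_nonpos_of_nonneg
    (by nlinarith [mul_nonneg (show (0:ℝ) ≤ 4*m*t by positivity) (show (0:ℝ) ≤ x - A0a ℓ t by linarith)] : 4*m*t*(A0a ℓ t - x) ≤ 0)
    (by positivity : (0:ℝ) ≤ (t+m)*(t-m))]

lemma Ga0_eq_max : Ga0 ℓ m t x = max (FLa ℓ m t x) (FRa ℓ m t x) := by
  unfold Ga0
  split_ifs with h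
  · exact (max_eq_left (FRa_le_FLa hℓ hm ht h)).symm
  · exact (max_eq_right (FLa_le_FRa hℓ hm ht (le_of_not_ge h))).symm

lemma FLa_mono : Monotone (FLa ℓ m t) := by
  intro x y hxy
  unfold FLa
  have h1 : (0:ℝ) < t + m := by linarith
  have h2 : (0:ℝ) < t - m := by linarith
  gcongr

lemma FRa_mono : Monotone (FRa ℓ m t) := by
  intro x y hxy
  unfold FRa
  have h1 : (0:ℝ) < t - m := by linarith
  have h2 : (0:ℝ) ≤ t + m := by linarith
  gcongr

lemma Ga0_mono : Monotone (Ga0 ℓ m t) := by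
  intro x y hxy
  rw [Ga0_eq_max hℓ hm ht, Ga0_eq_max hℓ hm ht]
  exact max_le_max (FLa_mono hℓ hm ht hxy) (FRa_mono hℓ hm ht hxy)

/-- wrap-around identity -/
lemma Ga0_wrap : Ga0 ℓ m t (A1a ℓ m t + 1) = Ga0 ℓ m t (A1a ℓ m t) + 1 := by
  have h0 : (0:ℝ) < t := by linarith
  have h1 : t + m ≠ 0 := by positivity
  have h2 : t - m ≠ 0 := by nlinarith
  have h3 : (2*t) ≠ 0 := by positivity
  rw [Ga0_eq_max hℓ hm ht, Ga0_eq_max hℓ hm ht]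
  rw [max_eq_right (FLa_le_FRa hℓ hm ht (le_of_lt (A0a_lt_A1a_add_one hℓ hm ht))),
      max_eq_left (FRa_le_FLa hℓ hm ht (le_of_lt (A1a_lt_A0a hℓ hm ht)))]
  unfold FLa FRa A1a
  field_simp
  ring

omit hℓ hm ht in
lemma Ga_add_int (n : ℤ) (x : ℝ) : Ga ℓ m t (x + n) = Ga ℓ m t x + n := by
  unfold Ga
  have h1 : x + (n:ℝ) - A1a ℓ m t = (x - A1a ℓ m t) + (n:ℝ) := by ring
  rw [h1, Int.floor_add_intCast]
  push_cast
  ring_nf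

omit hℓ hm ht in
lemma Ga_eq_Ga0 {x : ℝ} (h1 : A1a ℓ m t ≤ x) (h2 : x < A1a ℓ m t + 1) :
    Ga ℓ m t x = Ga0 ℓ m t x := by
  unfold Ga
  have h : ⌊x - A1a ℓ m t⌋ = 0 := by
    rw [Int.floor_eq_zero_iff]
    simp only [mem_Ico]
    constructor <;> linarith
  rw [h]
  push_cast
  ring_nf

lemma Ga_mono : Monotone (Ga ℓ m t) := by
  intro x y hxy
  unfold Ga
  set k := ⌊x - A1a ℓ m t⌋ with hk
  set k' := ⌊y - A1a ℓ m t⌋ with hk'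
  have hkk : k ≤ k' := Int.floor_le_floor (by linarith)
  have hx1 : x - k ≤ A1a ℓ m t + 1 := by
    have := Int.lt_floor_add_one (x - A1a ℓ m t)
    push_cast
    linarith
  have hy0 : A1a ℓ m t ≤ y - k' := by
    have := Int.floor_le (y - A1a ℓ m t)
    push_cast
    linarith
  rcases eq_or_lt_of_le hkk with h | h
  · rw [← h]
    have : x - (k:ℝ) ≤ y - (k:ℝ) := by linarith
    have := Ga0_mono hℓ hm ht this
    push_cast
    linarith
  · have hk1 : (k:ℝ) + 1 ≤ (k':ℝ) := by exact_mod_cast Int.add_one_le_of_lt h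
    have e1 : Ga0 ℓ m t (x - k) ≤ Ga0 ℓ m t (A1a ℓ m t + 1) := Ga0_mono hℓ hm ht hx1
    have e2 : Ga0 ℓ m t (A1a ℓ m t) ≤ Ga0 ℓ m t (y - k') := Ga0_mono hℓ hm ht hy0
    have e3 := Ga0_wrap hℓ hm ht
    push_cast
    linarith

noncomputable def GLa (ℓ m t x : ℝ) : ℝ := (2*ℓ + 3*m + (t - m)*x)/(t + m)

omit hℓ hm ht in
lemma GLa_eq (x : ℝ) (h : t + m ≠ 0) : FLa ℓ m t (x - 1) + 1 = GLa ℓ m t x := by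
  unfold FLa GLa
  field_simp
  ring

lemma gapL {t' x : ℝ} (htt : t < t') (hx : x ≤ 1/2) :
    FLa ℓ m t' x + 2*ℓ*(t'-t)/(t'+m)^2 ≤ FLa ℓ m t x := by
  have h0 : (0:ℝ) < t := by linarith
  have h1 : (0:ℝ) < t + m := by linarith
  have h2 : (0:ℝ) < t' + m := by linarith
  have key : FLa ℓ m t x - FLa ℓ m t' x = (t'-t)*(2*ℓ+m-2*m*x)/((t+m)*(t'+m)) := by
    unfold FLa
    field_simp
    ring
  have hnum : 2*ℓ ≤ 2*ℓ+m-2*m*x := by nlinarith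
  have hP : (0:ℝ) ≤ (t'-t)*(t'+m) := mul_nonneg (by linarith) (by linarith)
  have hA : 2*ℓ*(t+m) ≤ (2*ℓ+m-2*m*x)*(t'+m) :=
    mul_le_mul hnum (by linarith) (by linarith) (by linarith)
  have : 2*ℓ*(t'-t)/(t'+m)^2 ≤ (t'-t)*(2*ℓ+m-2*m*x)/((t+m)*(t'+m)) := by
    rw [div_le_div_iff₀ (by positivity) (by positivity)]
    nlinarith [mul_le_mul_of_nonneg_left hA hP]
  linarith

lemma gapR {t' x : ℝ} (htt : t < t') (hx : A0a ℓ t ≤ x) :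
    FRa ℓ m t' x + 2*ℓ*(t'-t)/(t'+m)^2 ≤ FRa ℓ m t x := by
  have h0 : (0:ℝ) < t := by linarith
  have h1 : (0:ℝ) < t - m := by linarith
  have h2 : (0:ℝ) < t' - m := by linarith
  have h3 : (0:ℝ) < t' + m := by linarith
  have key : FRa ℓ m t x - FRa ℓ m t' x = (t'-t)*(2*ℓ-m+2*m*x)/((t-m)*(t'-m)) := by
    unfold FRa
    field_simp
    ring
  have hx' : t - 2*ℓ ≤ 2*t*x := by
    have := (div_le_iff₀ (by positivity : (0:ℝ) < 2*t)).1 hx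
    linarith [this]
  have hnum : 2*ℓ*(t-m)/t ≤ 2*ℓ-m+2*m*x := by
    rw [div_le_iff₀ h0]
    nlinarith
  have step1 : 2*ℓ*(t'-t)/(t*(t'-m)) ≤ (t'-t)*(2*ℓ-m+2*m*x)/((t-m)*(t'-m)) := by
    rw [div_le_div_iff₀ (mul_pos h0 h2) (mul_pos h1 h2)]
    have e1 : (0:ℝ) ≤ (t'-t)*(t'-m) := mul_nonneg (by linarith) (by linarith)
    nlinarith [mul_le_mul_of_nonneg_left ((div_le_iff₀ h0).1 hnum) e1]
  have step2 : 2*ℓ*(t'-t)/(t'+m)^2 ≤ 2*ℓ*(t'-t)/(t*(t'-m)) := by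
    rw [div_le_div_iff₀ (by positivity) (mul_pos h0 h2)]
    have e2 : t*(t'-m) ≤ (t'+m)^2 := by nlinarith [mul_nonneg (show (0:ℝ) ≤ t'-t by linarith) (show (0:ℝ) ≤ t' by linarith)]
    have e3 : (0:ℝ) ≤ 2*ℓ*(t'-t) := mul_nonneg (by positivity) (by linarith)
    nlinarith [mul_le_mul_of_nonneg_left e2 e3]
  linarith

lemma gapG {t' x : ℝ} (htt : t < t') (hx : x ≤ 1) :
    GLa ℓ m t' x + 2*ℓ*(t'-t)/(t'+m)^2 ≤ GLa ℓ m t x := by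
  have h0 : (0:ℝ) < t := by linarith
  have h1 : (0:ℝ) < t + m := by linarith
  have h2 : (0:ℝ) < t' + m := by linarith
  have key : GLa ℓ m t x - GLa ℓ m t' x = (t'-t)*(2*ℓ+3*m-2*m*x)/((t+m)*(t'+m)) := by
    unfold GLa
    field_simp
    ring
  have hnum : 2*ℓ ≤ 2*ℓ+3*m-2*m*x := by nlinarith
  have hP : (0:ℝ) ≤ (t'-t)*(t'+m) := mul_nonneg (by linarith) (by linarith)
  have hA : 2*ℓ*(t+m) ≤ (2*ℓ+3*m-2*m*x)*(t'+m) :=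
    mul_le_mul hnum (by linarith) (by linarith) (by linarith)
  have : 2*ℓ*(t'-t)/(t'+m)^2 ≤ (t'-t)*(2*ℓ+3*m-2*m*x)/((t+m)*(t'+m)) := by
    rw [div_le_div_iff₀ (by positivity) (by positivity)]
    nlinarith [mul_le_mul_of_nonneg_left hA hP]
  linarith

lemma FRa_le_GLa {x : ℝ} (hx : x ≤ A1a ℓ m t + 1) : FRa ℓ m t x ≤ GLa ℓ m t x := by
  have h0 : (0:ℝ) < t := by linarith
  have h1 : (0:ℝ) < t + m := by linarith
  have h2 : (0:ℝ) < t - m := by linarith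
  have key : GLa ℓ m t x - FRa ℓ m t x = 4*m*t*(A1a ℓ m t + 1 - x)/((t+m)*(t-m)) := by
    unfold GLa FRa A1a
    field_simp
    ring
  nlinarith [div_nonneg (by nlinarith [mul_nonneg (show (0:ℝ) ≤ 4*m*t by positivity) (show (0:ℝ) ≤ A1a ℓ m t + 1 - x by linarith)] : (0:ℝ) ≤ 4*m*t*(A1a ℓ m t + 1 - x)) (le_of_lt (mul_pos h1 h2))]

/-- The parameter gap: for `t < t'`, `Ga t'` lies uniformly below `Ga t`. -/
lemma Ga_gap {t' : ℝ} (htt : t < t') (x : ℝ) :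
    Ga ℓ m t' x + 2*ℓ*(t'-t)/(t'+m)^2 ≤ Ga ℓ m t x := by
  have ht' : 2*ℓ + m < t' := by linarith
  -- reduce to the fundamental domain of t'
  set n := ⌊x - A1a ℓ m t'⌋ with hn
  have hx0 : A1a ℓ m t' ≤ x - n := by
    have := Int.floor_le (x - A1a ℓ m t')
    push_cast
    linarith
  have hx1 : x - n < A1a ℓ m t' + 1 := by
    have := Int.lt_floor_add_one (x - A1a ℓ m t')
    push_cast
    linarith
  have key : ∀ y : ℝ, A1a ℓ m t' ≤ y → y < A1a ℓ m t' + 1 →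
      Ga ℓ m t' y + 2*ℓ*(t'-t)/(t'+m)^2 ≤ Ga ℓ m t y := by
    intro y hy0 hy1
    have hA1lt : A1a ℓ m t < A1a ℓ m t' := by
      unfold A1a
      rw [neg_div, neg_div, neg_lt_neg_iff]
      apply div_lt_div_of_pos_left (by linarith) (by linarith) (by linarith)
    have hA1t : -(1/2:ℝ) < A1a ℓ m t := A1a_gt hℓ hm ht
    have hA1t' : A1a ℓ m t' < 0 := A1a_neg hℓ hm ht'
    have hGat' : Ga ℓ m t' y = Ga0 ℓ m t' y := Ga_eq_Ga0 hy0 hy1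
    have hA0lt : A0a ℓ t < A0a ℓ t' := by
      unfold A0a
      rw [div_lt_div_iff₀ (by linarith) (by linarith)]
      nlinarith
    rcases le_or_gt y (A0a ℓ t') with hc1 | hc1
    · -- both maps: compare via branches; y ≤ A0a t' < 1/2
      have hy12 : y ≤ 1/2 := le_of_lt (lt_of_le_of_lt hc1 (A0a_lt_half hℓ hm ht'))
      have hGat : Ga ℓ m t y = Ga0 ℓ m t y :=
        Ga_eq_Ga0 (by linarith) (by linarith)
      rw [hGat, hGat', Ga0_eq_max hℓ hm ht, Ga0_eq_max hℓ hm ht',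
        max_eq_left (FRa_le_FLa hℓ hm ht' hc1)]
      calc FLa ℓ m t' y + 2*ℓ*(t'-t)/(t'+m)^2 ≤ FLa ℓ m t y := gapL hℓ hm ht htt hy12
        _ ≤ max (FLa ℓ m t y) (FRa ℓ m t y) := le_max_left _ _
    · rcases lt_or_ge y (A1a ℓ m t + 1) with hc2 | hc2
      · have hGat : Ga ℓ m t y = Ga0 ℓ m t y := Ga_eq_Ga0 (by linarith) hc2
        rw [hGat, hGat', Ga0_eq_max hℓ hm ht, Ga0_eq_max hℓ hm ht',
          max_eq_right (FLa_le_FRa hℓ hm ht' (le_of_lt hc1))]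
        calc FRa ℓ m t' y + 2*ℓ*(t'-t)/(t'+m)^2 ≤ FRa ℓ m t y :=
              gapR hℓ hm ht htt (by linarith)
          _ ≤ max (FLa ℓ m t y) (FRa ℓ m t y) := le_max_right _ _
      · -- wrap case
        have hy1' : y ≤ 1 := by linarith
        have hfl : ⌊y - A1a ℓ m t⌋ = 1 := by
          rw [Int.floor_eq_iff]
          constructor
          · push_cast; linarith
          · push_cast; linarith
        have hGat : Ga ℓ m t y = Ga0 ℓ m t (y - 1) + 1 := by
          unfold Ga
          rw [hfl]
          push_cast
          ring_nf
        rw [hGat, hGat', Ga0_eq_max hℓ hm ht, Ga0_eq_max hℓ hm ht',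
          max_eq_right (FLa_le_FRa hℓ hm ht' (le_of_lt hc1))]
        have e1 : FRa ℓ m t' y ≤ GLa ℓ m t' y := FRa_le_GLa hℓ hm ht' (by linarith)
        have e2 : GLa ℓ m t' y + 2*ℓ*(t'-t)/(t'+m)^2 ≤ GLa ℓ m t y := gapG hℓ hm ht htt hy1'
        have e3 : FLa ℓ m t (y - 1) + 1 = GLa ℓ m t y := GLa_eq (ℓ := ℓ) (m := m) (t := t) y (by intro h; nlinarith)
        calc FRa ℓ m t' y + 2*ℓ*(t'-t)/(t'+m)^2
            ≤ GLa ℓ m t y := by linarith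
          _ = FLa ℓ m t (y-1) + 1 := e3.symm
          _ ≤ max (FLa ℓ m t (y-1)) (FRa ℓ m t (y-1)) + 1 := by
              have := le_max_left (FLa ℓ m t (y-1)) (FRa ℓ m t (y-1))
              linarith
  have := key (x - n) hx0 hx1
  have e1 : Ga ℓ m t (x - n) = Ga ℓ m t x - n := by
    have := Ga_add_int (ℓ := ℓ) (m := m) (t := t) (-n) x
    push_cast at this
    simp only [sub_eq_add_neg]
    linarith [this]
  have e2 : Ga ℓ m t' (x - n) = Ga ℓ m t' x - n := by
    have := Ga_add_int (ℓ := ℓ) (m := m) (t := t') (-n) x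
    push_cast at this
    simp only [sub_eq_add_neg]
    linarith [this]
  rw [e1, e2] at this
  linarith

omit hℓ hm ht in
lemma Ga_map_add_one (x : ℝ) : Ga ℓ m t (x + 1) = Ga ℓ m t x + 1 := by
  have := Ga_add_int (ℓ := ℓ) (m := m) (t := t) 1 x
  push_cast at this
  exact this

end algebra

/-- The lift as a bundled monotone degree-one circle map. -/
noncomputable def fga (ℓ m t : ℝ) (hℓ : 0 < ℓ) (hm : 0 < m) (ht : 2*ℓ + m < t) :
    CircleDeg1Lift :=
  ⟨⟨Ga ℓ m t, Ga_mono hℓ hm ht⟩, Ga_map_add_one⟩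

lemma fga_coe (ℓ m t : ℝ) (hℓ : 0 < ℓ) (hm : 0 < m) (ht : 2*ℓ + m < t) :
    ⇑(fga ℓ m t hℓ hm ht) = Ga ℓ m t := rfl

/-- Dirichlet-type approximation from above by rationals, for irrational numbers. -/
lemma exists_rat_approx (ρ : ℝ) (hρ : Irrational ρ) {ε : ℝ} (hε : 0 < ε) :
    ∃ (q : ℕ) (p : ℤ), 0 < q ∧ 0 < (p : ℝ) - q * ρ ∧ (p : ℝ) - q * ρ < ε := by
  obtain ⟨n, hn⟩ : ∃ n : ℕ, 0 < n ∧ 1/((n:ℝ)+1) < ε := by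
    refine ⟨⌈1/ε⌉₊ + 1, Nat.succ_pos _, ?_⟩
    rw [div_lt_iff₀ (by positivity)]
    have h1 : (1:ℝ)/ε ≤ ⌈1/ε⌉₊ := Nat.le_ceil _
    have h2 : (1:ℝ)/ε < (⌈1/ε⌉₊ + 1 + 1 : ℝ) := by push_cast; linarith
    calc (1:ℝ) = ε * (1/ε) := by field_simp
      _ < ε * ((⌈1/ε⌉₊:ℝ) + 1 + 1) := by
          apply mul_lt_mul_of_pos_left _ hε
          push_cast
          linarith
      _ = ε * ((↑(⌈1/ε⌉₊ + 1):ℝ) + 1) := by push_cast; ring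
  obtain ⟨hn0, hnε⟩ := hn
  obtain ⟨j, k, hk0, hkn, hjk⟩ := Real.exists_int_int_abs_mul_sub_le ρ hn0
  set δ : ℝ := (k:ℝ) * ρ - j with hδ
  have hδirr : Irrational δ := by
    have h1 : Irrational ((k:ℝ) * ρ) := by
      rw [show ((k:ℝ) * ρ) = ρ * (k:ℝ) by ring]
      exact hρ.mul_intCast (by exact_mod_cast hk0.ne')
    simpa [hδ] using h1.sub_intCast j
  have hδne : δ ≠ 0 := by
    intro h
    exact hδirr (h ▸ ⟨0, by norm_num⟩)
  have hδlt : |δ| < ε := lt_of_le_of_lt hjk hnε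
  have hkc : ((k.toNat : ℕ) : ℝ) = (k : ℝ) := by
    exact_mod_cast Int.toNat_of_nonneg hk0.le
  rcases lt_or_gt_of_ne hδne with hneg | hpos
  · -- δ < 0 : take q = k, p = j
    refine ⟨k.toNat, j, ?_, ?_, ?_⟩
    · exact_mod_cast Int.lt_toNat.mpr (by simpa using hk0)
    · rw [hkc]; simp only [hδ] at hneg; linarith
    · rw [hkc]
      have : -δ < ε := by rw [abs_lt] at hδlt; linarith [hδlt.1]
      simp only [hδ] at this; linarith
  · -- δ > 0 : pass to a multiple landing just below an integer
    have hδ1 : δ < 1 := by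
      rcases abs_lt.1 hδlt with ⟨_, h2⟩
      have hn1 : (1:ℝ) ≤ n := by exact_mod_cast hn0
      have : 1/((n:ℝ)+1) < 1 := by
        rw [div_lt_one (by positivity)]; linarith
      linarith [hjk, le_abs_self δ]
    set J : ℤ := ⌊1/δ⌋ with hJ
    have hJ1 : 1 ≤ J := by
      rw [hJ, Int.le_floor]
      push_cast
      rw [le_div_iff₀ hpos]
      linarith
    have hJδ : (J:ℝ) * δ ≤ 1 := by
      have := Int.floor_le (1/δ)
      calc (J:ℝ) * δ ≤ (1/δ) * δ := by
            apply mul_le_mul_of_nonneg_right _ hpos.le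
            exact this
        _ = 1 := by field_simp
    have hJδne : (J:ℝ) * δ ≠ 1 := by
      intro h
      have hirr : Irrational ((J:ℝ) * δ) := by
        rw [mul_comm]
        exact hδirr.mul_intCast (by intro hJ0; rw [hJ0] at hJ1; norm_num at hJ1)
      exact hirr (h ▸ ⟨1, by norm_num⟩)
    have hJδ2 : 1 - δ < (J:ℝ) * δ := by
      have := Int.lt_floor_add_one (1/δ)
      have h2 : 1/δ * δ < ((J:ℝ) + 1) * δ := by
        apply mul_lt_mul_of_pos_right _ hpos
        exact this
      rw [one_div_mul_cancel hδne] at h2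
      nlinarith
    refine ⟨(J*k).toNat, J*j + 1, ?_, ?_, ?_⟩
    · have : 0 < J*k := mul_pos (by linarith) hk0
      exact_mod_cast Int.lt_toNat.mpr (by simpa using this)
    · have hc : (((J*k).toNat : ℕ) : ℝ) = ((J*k : ℤ) : ℝ) := by
        exact_mod_cast Int.toNat_of_nonneg (mul_pos (by linarith) hk0).le
      rw [hc]
      push_cast
      have hlt : (J:ℝ)*δ < 1 := lt_of_le_of_ne hJδ hJδne
      simp only [hδ] at hlt
      nlinarith
    · have hc : (((J*k).toNat : ℕ) : ℝ) = ((J*k : ℤ) : ℝ) := by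
        exact_mod_cast Int.toNat_of_nonneg (mul_pos (by linarith) hk0).le
      rw [hc]
      push_cast
      have h5 : 1 - δ < (J:ℝ)*δ := hJδ2
      have h6 : δ < ε := lt_of_le_of_lt (le_abs_self δ) hδlt
      simp only [hδ] at h5 h6
      nlinarith

open CircleDeg1Lift in
/-- Two circle lifts separated by a uniform gap cannot share an irrational
translation number. -/
lemma plateau_contradiction (f g : CircleDeg1Lift) {ε : ℝ} (hε : 0 < ε)
    (hfg : ∀ x, g x + ε ≤ f x) (heq : f.translationNumber = g.translationNumber)
    (hirr : Irrational g.translationNumber) : False := by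
  set ρ := g.translationNumber with hρ
  obtain ⟨q, p, hq, h1, h2⟩ := exists_rat_approx ρ hirr hε
  have hiter : ∀ n : ℕ, ∀ x : ℝ, g^[n+1] x + ε ≤ f^[n+1] x := by
    intro n
    induction n with
    | zero => simpa using hfg
    | succ n ih =>
      intro x
      rw [show n+1+1 = (n+1)+1 from rfl, Function.iterate_succ_apply',
        Function.iterate_succ_apply' (⇑f) (n+1) x]
      calc g ((⇑g)^[n+1] x) + ε ≤ f ((⇑g)^[n+1] x) := hfg _
        _ ≤ f ((⇑f)^[n+1] x) := f.mono (by linarith [ih x, hε])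
  by_cases hex : ∃ x : ℝ, x + ((p:ℝ) - ε) ≤ g^[q] x
  · obtain ⟨x₀, hx₀⟩ := hex
    obtain ⟨q', rfl⟩ : ∃ q', q = q' + 1 := ⟨q - 1, (Nat.succ_pred_eq_of_pos hq).symm⟩
    have hfq : x₀ + (p:ℝ) ≤ (f^(q'+1) : CircleDeg1Lift) x₀ := by
      rw [coe_pow]
      calc x₀ + (p:ℝ) = (x₀ + ((p:ℝ) - ε)) + ε := by ring
        _ ≤ g^[q'+1] x₀ + ε := by linarith
        _ ≤ f^[q'+1] x₀ := hiter q' x₀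
    have := le_translationNumber_of_add_int_le _ hfq
    rw [translationNumber_pow, heq] at this
    push_cast at this h1
    nlinarith [this]
  · push_neg at hex
    obtain ⟨q', rfl⟩ : ∃ q', q = q' + 1 := ⟨q - 1, (Nat.succ_pred_eq_of_pos hq).symm⟩
    have hle : ∀ x : ℝ, (g^(q'+1) : CircleDeg1Lift) x ≤ x + ((p:ℝ) - ε) := by
      intro x
      rw [coe_pow]
      exact (hex x).le
    have := translationNumber_le_of_le_add _ hle
    rw [translationNumber_pow] at this
    rw [hρ] at h2
    push_cast at this h2
    nlinarith [this]

section continuity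

variable {ℓ m : ℝ} (hℓ : 0 < ℓ) (hm : 0 < m)

local notation "Sub" => {t : ℝ // 2*ℓ + m < t}

include hℓ hm

/-- Joint continuity of the algebraic lift in (parameter, point). -/
lemma Ga_cont : Continuous fun p : Sub × ℝ => Ga ℓ m ↑p.1 p.2 := by
  classical
  set f : Sub × ℝ → ℝ → ℝ := fun p u =>
    p.2 + (max (FLa ℓ m ↑p.1 (A1a ℓ m ↑p.1 + u)) (FRa ℓ m ↑p.1 (A1a ℓ m ↑p.1 + u))
      - (A1a ℓ m ↑p.1 + u)) with hf
  set s : Sub × ℝ → ℝ := fun p => p.2 - A1a ℓ m ↑p.1 with hs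
  have c1 : Continuous fun x : (Sub × ℝ) × ℝ => (↑x.1.1 : ℝ) :=
    continuous_subtype_val.comp (continuous_fst.comp continuous_fst)
  have hpos : ∀ x : (Sub × ℝ) × ℝ, (0:ℝ) < ↑x.1.1 := fun x => by
    have := x.1.1.2; nlinarith
  have hA1cc : Continuous fun x : (Sub × ℝ) × ℝ => A1a ℓ m ↑x.1.1 := by
    unfold A1a
    exact continuous_const.div (continuous_const.mul c1) fun x => by
      have := hpos x; positivity
  have harg : Continuous fun x : (Sub × ℝ) × ℝ => A1a ℓ m ↑x.1.1 + x.2 :=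
    hA1cc.add continuous_snd
  have hFL : Continuous fun x : (Sub × ℝ) × ℝ =>
      FLa ℓ m ↑x.1.1 (A1a ℓ m ↑x.1.1 + x.2) := by
    unfold FLa
    exact ((continuous_const.add ((c1.sub continuous_const).mul harg)).div
      (c1.add continuous_const)) fun x => by
        have := x.1.1.2; simp only [Pi.add_apply]; nlinarith
  have hFR : Continuous fun x : (Sub × ℝ) × ℝ =>
      FRa ℓ m ↑x.1.1 (A1a ℓ m ↑x.1.1 + x.2) := by
    unfold FRa
    exact ((continuous_const.add ((c1.add continuous_const).mul harg)).div
      (c1.sub continuous_const)) fun x => by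
        have := x.1.1.2; simp only [Pi.sub_apply]; nlinarith
  have hunc : Continuous (Function.uncurry f) := by
    simp only [hf, Function.uncurry]
    exact (continuous_snd.comp continuous_fst).add ((hFL.max hFR).sub harg)
  have hscont : Continuous s := by
    simp only [hs]
    exact continuous_snd.sub ((continuous_const.div
      (continuous_const.mul (continuous_subtype_val.comp continuous_fst))
      fun p => by have := p.1.2; nlinarith : Continuous fun p : Sub × ℝ =>
        A1a ℓ m ↑p.1))
  have hper : ∀ p : Sub × ℝ, f p 0 = f p 1 := by
    intro p
    have htp := p.1.2
    have w := Ga0_wrap hℓ hm htp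
    rw [Ga0_eq_max hℓ hm htp, Ga0_eq_max hℓ hm htp] at w
    simp only [hf]
    rw [add_zero]
    linarith [w]
  have := ContinuousOn.comp_fract (hunc.continuousOn) hscont hper
  apply this.congr
  intro p
  simp only [hf, hs]
  have hfr : A1a ℓ m ↑p.1 + Int.fract (p.2 - A1a ℓ m ↑p.1)
      = p.2 - ⌊p.2 - A1a ℓ m ↑p.1⌋ := by
    rw [Int.fract]
    ring
  rw [hfr, ← Ga0_eq_max hℓ hm p.1.2]
  unfold Ga
  ring

lemma Phi_cont (q : ℕ) : Continuous fun u : Sub => (Ga ℓ m ↑u)^[q] 0 := by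
  induction q with
  | zero => simpa using continuous_const
  | succ q ih =>
    simp only [Function.iterate_succ_apply']
    exact (Ga_cont hℓ hm).comp (continuous_id.prodMk ih)

lemma tau_cont :
    Continuous fun u : Sub => (fga ℓ m ↑u hℓ hm u.2).translationNumber := by
  apply TendstoUniformly.continuous (p := (Filter.atTop : Filter ℕ))
    (F := fun (n : ℕ) (u : Sub) => (Ga ℓ m ↑u)^[n+1] 0 / (n+1))
  · rw [Metric.tendstoUniformly_iff]
    intro ε hε
    obtain ⟨N, hN⟩ : ∃ N : ℕ, 1/((N:ℝ)+1) < ε := by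
      obtain ⟨N, hN⟩ := exists_nat_gt (1/ε)
      exact ⟨N, by rw [div_lt_iff₀ (by positivity)]; rw [div_lt_iff₀ hε] at hN; nlinarith⟩
    filter_upwards [Filter.eventually_ge_atTop N] with n hn u
    have hn1 : (0:ℝ) < (n:ℝ)+1 := by positivity
    have key := (fga ℓ m ↑u hℓ hm u.2).dist_pow_map_zero_mul_translationNumber_le (n+1)
    have hcoe : ((fga ℓ m ↑u hℓ hm u.2 ^ (n+1) : CircleDeg1Lift)) 0 = (Ga ℓ m ↑u)^[n+1] 0 := by
      rw [CircleDeg1Lift.coe_pow, fga_coe]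
    rw [hcoe, Real.dist_eq] at key
    rw [Real.dist_eq]
    have e1 : (fga ℓ m ↑u hℓ hm u.2).translationNumber - (Ga ℓ m ↑u)^[n+1] 0 / ((n:ℝ)+1)
        = -(((Ga ℓ m ↑u)^[n+1] 0 - ((n:ℝ)+1) * (fga ℓ m ↑u hℓ hm u.2).translationNumber) / ((n:ℝ)+1)) := by
      push_cast
      field_simp
      ring
    rw [e1, abs_neg, abs_div, abs_of_pos hn1]
    push_cast at key
    have hNn : ((N:ℝ)+1) ≤ ((n:ℝ)+1) := by
      have : (N:ℝ) ≤ (n:ℝ) := by exact_mod_cast hn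
      linarith
    calc |(Ga ℓ m ↑u)^[n+1] 0 - (↑n+1) * (fga ℓ m ↑u hℓ hm u.2).translationNumber| / ((n:ℝ)+1)
        ≤ 1/((n:ℝ)+1) := by gcongr
      _ ≤ 1/((N:ℝ)+1) := by gcongr
      _ < ε := hN
  · exact Filter.Frequently.of_forall fun n =>
      ((Phi_cont hℓ hm (n+1)).div_const _)

end continuity

noncomputable def rhoA (ℓ m t : ℝ) : ℝ := rotationNumber (Ga ℓ m t)

lemma rhoA_eq_tau {ℓ m t : ℝ} (hℓ : 0 < ℓ) (hm : 0 < m) (ht : 2*ℓ + m < t) :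
    rhoA ℓ m t = (fga ℓ m t hℓ hm ht).translationNumber := by
  have h := (fga ℓ m t hℓ hm ht).tendsto_translation_number₀
  have h2 : Tendsto (fun n : ℕ => (Ga ℓ m t)^[n] 0 / (n:ℝ)) atTop
      (nhds (fga ℓ m t hℓ hm ht).translationNumber) := by
    apply h.congr
    intro n
    rw [CircleDeg1Lift.coe_pow, fga_coe]
  exact h2.limUnder_eq

lemma rhoA_anti {ℓ m t t' : ℝ} (hℓ : 0 < ℓ) (hm : 0 < m) (ht : 2*ℓ + m < t)
    (htt : t < t') : rhoA ℓ m t' ≤ rhoA ℓ m t := by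
  have ht' : 2*ℓ + m < t' := lt_trans ht htt
  rw [rhoA_eq_tau hℓ hm ht, rhoA_eq_tau hℓ hm ht']
  apply CircleDeg1Lift.translationNumber_mono
  show ∀ x : ℝ, Ga ℓ m t' x ≤ Ga ℓ m t x
  intro x
  have hgap := Ga_gap hℓ hm ht htt x
  have hε : 0 < 2*ℓ*(t'-t)/(t'+m)^2 := by
    have h1 : (0:ℝ) < t' + m := by linarith
    have h2 : (0:ℝ) < t' - t := by linarith
    have h3 : (0:ℝ) < (t'+m)^2 := by positivity
    positivity
  linarith

lemma rhoA_contOn {ℓ m : ℝ} (hℓ : 0 < ℓ) (hm : 0 < m) :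
    ContinuousOn (rhoA ℓ m) (Ioi (2*ℓ+m)) := by
  rw [continuousOn_iff_continuous_restrict]
  exact (tau_cont hℓ hm).congr fun u => (rhoA_eq_tau hℓ hm u.2).symm

/-- On any parameter interval there is a parameter with rational rotation number. -/
lemma ratInInterval {ℓ m t1 t2 : ℝ} (hℓ : 0 < ℓ) (hm : 0 < m)
    (ht1 : 2*ℓ + m < t1) (h12 : t1 < t2) :
    ∃ t ∈ Icc t1 t2, ∃ r : ℚ, rhoA ℓ m t = (r : ℝ) := by
  by_cases heq : rhoA ℓ m t1 = rhoA ℓ m t2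
  · by_cases hrat : ∃ r : ℚ, rhoA ℓ m t1 = (r : ℝ)
    · exact ⟨t1, ⟨le_refl _, h12.le⟩, hrat⟩
    · exfalso
      have ht2 : 2*ℓ + m < t2 := lt_trans ht1 h12
      have hirr : Irrational (rhoA ℓ m t1) := by
        rw [Irrational]
        intro ⟨r, hr⟩
        exact hrat ⟨r, hr.symm⟩
      have hε : 0 < 2*ℓ*(t2-t1)/(t2+m)^2 := by
        have h1 : (0:ℝ) < t2 + m := by linarith
        have h2 : (0:ℝ) < t2 - t1 := by linarith
        positivity
      apply plateau_contradiction (fga ℓ m t1 hℓ hm ht1) (fga ℓ m t2 hℓ hm ht2) hε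
      · intro x
        exact Ga_gap hℓ hm ht1 h12 x
      · rw [← rhoA_eq_tau hℓ hm ht1, ← rhoA_eq_tau hℓ hm ht2]
        exact heq
      · rw [← rhoA_eq_tau hℓ hm ht2, ← heq]
        exact hirr
  · have hle := rhoA_anti hℓ hm ht1 h12
    have hlt : rhoA ℓ m t2 < rhoA ℓ m t1 := lt_of_le_of_ne hle fun h => heq h.symm
    obtain ⟨r, hr1, hr2⟩ := exists_rat_btwn hlt
    have hsub : Icc t1 t2 ⊆ Ioi (2*ℓ+m) := fun x hx => lt_of_lt_of_le ht1 hx.1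
    have hIVT := intermediate_value_Icc' h12.le ((rhoA_contOn hℓ hm).mono hsub)
    have hrmem : (r:ℝ) ∈ Icc (rhoA ℓ m t2) (rhoA ℓ m t1) := ⟨hr1.le, hr2.le⟩
    obtain ⟨t, htmem, htr⟩ := hIVT hrmem
    exact ⟨t, htmem, r, htr⟩

lemma Ftrap_eq_Ga {ℓ α θ : ℝ} (hℓ : 0 < ℓ) (hα : 0 < α) (hα2 : α < π / 2)
    (hθ1 : Real.arctan (2*ℓ + Real.tan α) < θ) (hθ2 : θ < π / 2) :
    Ftrap ℓ α θ = Ga ℓ (Real.tan α) (Real.tan θ) := by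
  have hm : 0 < Real.tan α := Real.tan_pos_of_pos_of_lt_pi_div_two hα hα2
  have harc0 : 0 ≤ Real.arctan (2*ℓ + Real.tan α) := by
    have h0 : Real.arctan 0 < Real.arctan (2*ℓ + Real.tan α) :=
      Real.arctan_strictMono (by linarith)
    rw [Real.arctan_zero] at h0
    exact h0.le
  have ht : 2*ℓ + Real.tan α < Real.tan θ := by
    have := Real.tan_lt_tan_of_nonneg_of_lt_pi_div_two harc0 hθ2 hθ1
    rwa [Real.tan_arctan] at this
  have hθpos : 0 < θ := lt_of_le_of_lt harc0 hθ1
  have hcosθ : 0 < Real.cos θ := Real.cos_pos_of_mem_Ioo ⟨by linarith [Real.pi_pos], hθ2⟩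
  have hcosα : 0 < Real.cos α := Real.cos_pos_of_mem_Ioo ⟨by linarith [Real.pi_pos], hα2⟩
  set m := Real.tan α with hmdef
  set t := Real.tan θ with htdef
  have htpos : 0 < t := by nlinarith
  have htm : (0:ℝ) < t - m := by nlinarith
  have htm' : (0:ℝ) < t + m := by nlinarith
  have hLam : Lam α θ = (t + m)/(t - m) := by
    have h1 : Real.sin (θ + α) = Real.cos θ * Real.cos α * (t + m) := by
      rw [Real.sin_add, htdef, hmdef, Real.tan_eq_sin_div_cos, Real.tan_eq_sin_div_cos]
      field_simp
    have h2 : Real.sin (θ - α) = Real.cos θ * Real.cos α * (t - m) := by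
      rw [Real.sin_sub, htdef, hmdef, Real.tan_eq_sin_div_cos, Real.tan_eq_sin_div_cos]
      field_simp
    rw [Lam, h1, h2, mul_div_mul_left _ _ (by positivity)]
  have hFtrap0 : ∀ y : ℝ, Ftrap0 ℓ α θ y = Ga0 ℓ m t y := by
    intro y
    unfold Ftrap0 Ga0
    have hb : brk0 ℓ θ = A0a ℓ t := rfl
    rw [hb]
    split_ifs with h
    · rw [hLam]
      show -brk1 ℓ α θ + ((t+m)/(t-m))⁻¹ * (y - brk1 ℓ α θ) = FLa ℓ m t y
      unfold brk1 FLa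
      rw [← hmdef, ← htdef]
      field_simp
      ring
    · show 1 - brk0 ℓ θ + Lam α θ * (y - brk0 ℓ θ) = FRa ℓ m t y
      rw [hLam]
      unfold brk0 FRa
      rw [← htdef]
      field_simp
      ring
  funext x
  unfold Ftrap Ga
  have hb1 : brk1 ℓ α θ = A1a ℓ m t := rfl
  rw [hb1, hFtrap0]

/-- the set of parameters θ with irrational rotation number has
empty interior; equivalently, every nonempty open subinterval of the
parameter interval contains a θ with rational rotation number. -/
theorem stmt17 (ℓ α : ℝ) (hℓ : 0 < ℓ) (hα : 0 < α) (hα2 : α < π / 2) :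
    interior {θ : ℝ | θ ∈ Set.Ioo (Real.arctan (2 * ℓ + Real.tan α)) (π / 2) ∧
      Irrational (rotationNumber (Ftrap ℓ α θ))} = ∅ ∧
    ∀ a b : ℝ, Real.arctan (2 * ℓ + Real.tan α) ≤ a → a < b → b ≤ π / 2 →
      ∃ θ ∈ Set.Ioo a b, ∃ r : ℚ, rotationNumber (Ftrap ℓ α θ) = (r : ℝ) := by
  have hm : 0 < Real.tan α := Real.tan_pos_of_pos_of_lt_pi_div_two hα hα2
  have harc0 : 0 ≤ Real.arctan (2*ℓ + Real.tan α) := by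
    have h0 : Real.arctan 0 < Real.arctan (2*ℓ + Real.tan α) :=
      Real.arctan_strictMono (by linarith)
    rw [Real.arctan_zero] at h0
    exact h0.le
  have part2 : ∀ a b : ℝ, Real.arctan (2 * ℓ + Real.tan α) ≤ a → a < b → b ≤ π / 2 →
      ∃ θ ∈ Set.Ioo a b, ∃ r : ℚ, rotationNumber (Ftrap ℓ α θ) = (r : ℝ) := by
    intro a b ha hab hb
    set a' := a + (b-a)/4 with ha'def
    set b' := a + (b-a)/2 with hb'def
    have h1 : a < a' := by rw [ha'def]; linarith
    have h2 : a' < b' := by rw [ha'def, hb'def]; linarith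
    have h3 : b' < b := by rw [hb'def]; linarith
    have ha'1 : Real.arctan (2*ℓ + Real.tan α) < a' := lt_of_le_of_lt ha h1
    have hb'2 : b' < π/2 := lt_of_lt_of_le h3 hb
    have ha'2 : a' < π/2 := lt_trans h2 hb'2
    have ha'0 : 0 < a' := lt_of_le_of_lt harc0 ha'1
    have hpi : 0 < π := Real.pi_pos
    have ht1 : 2*ℓ + Real.tan α < Real.tan a' := by
      have := Real.tan_lt_tan_of_nonneg_of_lt_pi_div_two harc0 ha'2 ha'1
      rwa [Real.tan_arctan] at this
    have h12 : Real.tan a' < Real.tan b' :=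
      Real.tan_lt_tan_of_nonneg_of_lt_pi_div_two ha'0.le hb'2 h2
    obtain ⟨tst, htmem, r, hr⟩ := ratInInterval hℓ hm ht1 h12
    have e1 : Real.arctan (Real.tan a') = a' := Real.arctan_tan (by linarith) ha'2
    have e2 : Real.arctan (Real.tan b') = b' := Real.arctan_tan (by linarith) hb'2
    have hlow : a' ≤ Real.arctan tst := by
      rw [← e1]; exact Real.arctan_strictMono.monotone htmem.1
    have hhigh : Real.arctan tst ≤ b' := by
      rw [← e2]; exact Real.arctan_strictMono.monotone htmem.2
    refine ⟨Real.arctan tst, ⟨by linarith, by linarith⟩, r, ?_⟩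
    have hθ1 : Real.arctan (2*ℓ + Real.tan α) < Real.arctan tst := lt_of_lt_of_le ha'1 hlow
    have hθ2 : Real.arctan tst < π/2 := Real.arctan_lt_pi_div_two _
    have hFG := Ftrap_eq_Ga hℓ hα hα2 hθ1 hθ2
    rw [hFG, Real.tan_arctan]
    exact hr
  refine ⟨?_, part2⟩
  rw [Set.eq_empty_iff_forall_notMem]
  intro θ₀ hθ₀
  have hθS : θ₀ ∈ {θ : ℝ | θ ∈ Set.Ioo (Real.arctan (2 * ℓ + Real.tan α)) (π / 2) ∧
      Irrational (rotationNumber (Ftrap ℓ α θ))} := interior_subset hθ₀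
  obtain ⟨hθIoo, hθirr⟩ := hθS
  obtain ⟨ε, hε, hball⟩ := Metric.isOpen_iff.1 isOpen_interior θ₀ hθ₀
  set a := max (θ₀ - ε/2) (Real.arctan (2*ℓ + Real.tan α)) with hadef
  set b := min (θ₀ + ε/2) (π/2) with hbdef
  have haθ : a < θ₀ := max_lt (by linarith) hθIoo.1
  have hbθ : θ₀ < b := lt_min (by linarith) hθIoo.2
  obtain ⟨θ, hθab, r, hr⟩ := part2 a b (le_max_right _ _) (by linarith) (min_le_right _ _)
  have hθball : θ ∈ Metric.ball θ₀ ε := by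
    rw [Metric.mem_ball, Real.dist_eq, abs_lt]
    have hl1 : θ₀ - ε/2 ≤ a := le_max_left _ _
    have hl2 : b ≤ θ₀ + ε/2 := min_le_left _ _
    constructor
    · linarith [hθab.1]
    · linarith [hθab.2]
  have hθS2 := interior_subset (hball hθball)
  exact Rat.not_irrational r (hr ▸ hθS2.2)
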